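/- arXiv:0802.3435 — 7 statements merged into one kernel-verified Lean document; each statement's English description precedes it below -/
import Mathlib

section
/- Let p be an odd prime and let ζ ∈ ℂ be a primitive p-th root of unity. Then ∑_{j=1}^{p-1} 1/(1-ζ^j)² = (p-1)(5-p)/12. (Equivalently, the holomorphic Lefschetz coefficient a₁ = (1/(p-1))·∑_{j=1}^{p-1} 1/((1-ζ^j)(1-ζ^j)) equals (5-p)/12.) -/
open Finset

/-- Sum of `k` in `ℂ` over `range n`. -/
private lemma sum_cast_range (n : ℕ) :
    ∑ k ∈ range n, (k : ℂ) = n * (n - 1) / 2 := by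
  induction n with
  | zero => simp
  | succ n ih =>
    rw [Finset.sum_range_succ, ih]
    push_cast
    ring

/-- Sum of `k²` in `ℂ` over `range n`. -/
private lemma sum_sq_cast_range (n : ℕ) :
    ∑ k ∈ range n, (k : ℂ) ^ 2 = n * (n - 1) * (2 * n - 1) / 6 := by
  induction n with
  | zero => simp
  | succ n ih =>
    rw [Finset.sum_range_succ, ih]
    push_cast
    ring

private lemma geom_zero {p : ℕ} (z : ℂ) (h1 : z ≠ 1) (hzp : z ^ p = 1) :
    ∑ k ∈ range p, z ^ k = 0 := by
  rw [geom_sum_eq h1, hzp, sub_self, zero_div]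

private lemma sum_mul_geom {p : ℕ} (z : ℂ) (h1 : z ≠ 1) (hzp : z ^ p = 1) :
    ∑ k ∈ range p, (k : ℂ) * z ^ k = p / (z - 1) := by
  have hz : z - 1 ≠ 0 := sub_ne_zero.mpr h1
  rw [eq_div_iff hz]
  have key : ∀ k : ℕ, ((k : ℂ) * z ^ k) * (z - 1)
      = (((k + 1 : ℕ) : ℂ) * z ^ (k + 1) - (k : ℂ) * z ^ k) - z ^ (k + 1) := by
    intro k
    push_cast
    ring
  calc (∑ k ∈ range p, (k : ℂ) * z ^ k) * (z - 1)
      = ∑ k ∈ range p, (((k : ℂ) * z ^ k) * (z - 1)) := by rw [Finset.sum_mul]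
    _ = ∑ k ∈ range p, ((((k + 1 : ℕ) : ℂ) * z ^ (k + 1) - (k : ℂ) * z ^ k) - z ^ (k + 1)) := by
        simp_rw [key]
    _ = (∑ k ∈ range p, (((k + 1 : ℕ) : ℂ) * z ^ (k + 1) - (k : ℂ) * z ^ k))
        - ∑ k ∈ range p, z ^ (k + 1) := by rw [Finset.sum_sub_distrib]
    _ = ((p : ℂ) * z ^ p - ((0:ℕ) : ℂ) * z ^ 0) - z * ∑ k ∈ range p, z ^ k := by
        rw [Finset.sum_range_sub (fun k => (k : ℂ) * z ^ k)]
        congr 1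
        rw [Finset.mul_sum]
        refine Finset.sum_congr rfl fun k _ => ?_
        ring
    _ = (p : ℂ) := by rw [hzp, geom_zero z h1 hzp]; ring

/-- For an odd prime `p` and a primitive `p`-th root of unity `ζ ∈ ℂ`,
`∑_{j=1}^{p-1} 1/(1-ζ^j)² = (p-1)(5-p)/12`. -/
theorem sum_inv_one_sub_zeta_pow_sq (p : ℕ) (hp : p.Prime) (hodd : Odd p)
    (ζ : ℂ) (hζ : IsPrimitiveRoot ζ p) :
    ∑ j ∈ Finset.Icc 1 (p - 1), 1 / (1 - ζ ^ j) ^ 2 =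
      ((p : ℂ) - 1) * (5 - (p : ℂ)) / 12 := by
  have hp0 : 0 < p := hp.pos
  have hpC : (p : ℂ) ≠ 0 := Nat.cast_ne_zero.mpr hp0.ne'
  have hIcc : Finset.Icc 1 (p - 1) = Finset.Ico 1 p := by
    rw [← Finset.Ico_add_one_right_eq_Icc]
    congr 1
    omega
  -- value of the geometric sum over `Ico 1 p`
  have hgeo : ∀ m : ℕ, ∑ j ∈ Finset.Ico 1 p, (ζ ^ m) ^ j
      = (if p ∣ m then (p : ℂ) else 0) - 1 := by
    intro m
    have h0 : ∑ j ∈ range p, (ζ ^ m) ^ j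
        = (ζ ^ m) ^ 0 + ∑ j ∈ Finset.Ico 1 p, (ζ ^ m) ^ j := by
      rw [Finset.range_eq_Ico, Finset.sum_eq_sum_Ico_succ_bot hp0]
    by_cases hdvd : p ∣ m
    · have h1 : ζ ^ m = 1 := (hζ.pow_eq_one_iff_dvd m).mpr hdvd
      simp [h1, hdvd]
      rw [Nat.cast_sub hp0, Nat.cast_one]
    · have h1 : ζ ^ m ≠ 1 := fun h => hdvd ((hζ.pow_eq_one_iff_dvd m).mp h)
      have hzp : (ζ ^ m) ^ p = 1 := by
        rw [← pow_mul, mul_comm, pow_mul, hζ.pow_eq_one, one_pow]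
      rw [geom_zero _ h1 hzp, pow_zero] at h0
      simp only [hdvd, if_false]
      linear_combination -h0
  -- each term in terms of the Fourier sum
  have hterm : ∀ j ∈ Finset.Ico 1 p,
      1 / (1 - ζ ^ j) ^ 2 = (∑ k ∈ range p, (k : ℂ) * (ζ ^ j) ^ k) ^ 2 / (p : ℂ) ^ 2 := by
    intro j hj
    rw [Finset.mem_Ico] at hj
    have h1 : ζ ^ j ≠ 1 := hζ.pow_ne_one_of_pos_of_lt (by omega) hj.2
    have hzp : (ζ ^ j) ^ p = 1 := by
      rw [← pow_mul, mul_comm, pow_mul, hζ.pow_eq_one, one_pow]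
    have hz : ζ ^ j - 1 ≠ 0 := sub_ne_zero.mpr h1
    have h1' : (1 : ℂ) - ζ ^ j ≠ 0 := sub_ne_zero.mpr (Ne.symm h1)
    rw [sum_mul_geom _ h1 hzp, div_pow]
    field_simp
    ring
  rw [hIcc, Finset.sum_congr rfl hterm, ← Finset.sum_div]
  -- expand the square into a double sum and swap
  have hsq : ∀ j : ℕ, (∑ k ∈ range p, (k : ℂ) * (ζ ^ j) ^ k) ^ 2
      = ∑ k ∈ range p, ∑ l ∈ range p, ((k : ℂ) * (l : ℂ)) * (ζ ^ (k + l)) ^ j := by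
    intro j
    rw [sq, Finset.sum_mul_sum]
    refine Finset.sum_congr rfl fun k _ => Finset.sum_congr rfl fun l _ => ?_
    have : (ζ ^ (k + l)) ^ j = (ζ ^ j) ^ k * (ζ ^ j) ^ l := by
      rw [← pow_mul, ← pow_mul, ← pow_mul, ← pow_add]
      congr 1
      ring
    rw [this]
    ring
  simp_rw [hsq]
  rw [Finset.sum_comm]
  have hswap : ∀ k : ℕ, ∑ j ∈ Finset.Ico 1 p, ∑ l ∈ range p, ((k : ℂ) * l) * (ζ ^ (k + l)) ^ j
      = ∑ l ∈ range p, ((k : ℂ) * l) * ((if p ∣ (k + l) then (p : ℂ) else 0) - 1) := by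
    intro k
    rw [Finset.sum_comm]
    refine Finset.sum_congr rfl fun l _ => ?_
    rw [← Finset.mul_sum, hgeo]
  simp_rw [hswap]
  -- split into the divisibility part and the plain part
  have hsplit : ∀ k l : ℕ, ((k : ℂ) * l) * ((if p ∣ (k + l) then (p : ℂ) else 0) - 1)
      = (if p ∣ (k + l) then (p : ℂ) * k * l else 0) - (k : ℂ) * l := by
    intro k l
    by_cases h : p ∣ (k + l) <;> simp [h] <;> ring
  simp_rw [hsplit, Finset.sum_sub_distrib]
  -- inner divisibility sum
  have hinner : ∀ k ∈ range p,
      ∑ l ∈ range p, (if p ∣ (k + l) then (p : ℂ) * k * l else 0)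
        = (p : ℂ) * k * ((p : ℂ) - k) := by
    intro k hk
    rw [Finset.mem_range] at hk
    rcases Nat.eq_zero_or_pos k with hk0 | hk0
    · subst hk0
      simp
    · rw [Finset.sum_eq_single (p - k)]
      · have hdvd : p ∣ (k + (p - k)) := by
          rw [Nat.add_sub_cancel' hk.le]
        rw [if_pos hdvd, Nat.cast_sub hk.le]
      · intro l hl hne
        rw [Finset.mem_range] at hl
        rw [if_neg]
        intro hdvd
        have heq : k + l = p := by
          obtain ⟨c, hc⟩ := hdvd
          rcases Nat.lt_or_ge c 2 with h2 | h2
          · interval_cases c <;> omega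
          · have h3 : p * 2 ≤ p * c := Nat.mul_le_mul_left p h2
            omega
        omega
      · intro hmem
        exfalso
        exact hmem (Finset.mem_range.mpr (by omega))
  rw [Finset.sum_congr rfl hinner]
  -- now everything is explicit polynomial sums
  have e1 : ∑ k ∈ range p, (p : ℂ) * k * ((p : ℂ) - k)
      = (p : ℂ) * ((p : ℂ) * ((p : ℂ) * ((p : ℂ) - 1) / 2)
          - (p : ℂ) * ((p : ℂ) - 1) * (2 * (p : ℂ) - 1) / 6) := by
    have : ∀ k ∈ range p, (p : ℂ) * k * ((p : ℂ) - k)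
        = (p : ℂ) * ((p : ℂ) * (k : ℂ) - (k : ℂ) ^ 2) := by
      intro k _; ring
    rw [Finset.sum_congr rfl this, ← Finset.mul_sum, Finset.sum_sub_distrib,
      ← Finset.mul_sum, sum_cast_range, sum_sq_cast_range]
  have e2 : ∀ k : ℕ, ∑ l ∈ range p, (k : ℂ) * l = (k : ℂ) * ((p : ℂ) * ((p : ℂ) - 1) / 2) := by
    intro k
    rw [← Finset.mul_sum, sum_cast_range]
  simp_rw [e2]
  rw [e1, ← Finset.sum_mul, sum_cast_range]
  field_simp
  ring
end

section
/- Let p be an odd prime and let ζ ∈ ℂ be a primitive p-th root of unity. Then ∑_{j=1}^{p-1} 1/((1-ζ^j)(1-ζ^{2j})) = (p-1)(11-p)/24. (Equivalently, the holomorphic Lefschetz coefficient a₂ = (1/(p-1))·∑_{j=1}^{p-1} 1/((1-ζ^j)(1-ζ^{2j})) equals (11-p)/24.) -/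
open Finset

private lemma sumId' (n : ℕ) : ∑ l ∈ range n, (l : ℂ) = n * (n - 1) / 2 := by
  induction n with
  | zero => simp
  | succ k ih => rw [sum_range_succ, ih]; push_cast; ring

private lemma sumSq' (n : ℕ) : ∑ l ∈ range n, (l : ℂ) ^ 2 = n * (n - 1) * (2 * n - 1) / 6 := by
  induction n with
  | zero => simp
  | succ k ih => rw [sum_range_succ, ih]; push_cast; ring

private lemma keyL (n : ℕ) (x : ℂ) :
    (x - 1) * ∑ k ∈ range n, (k : ℂ) * x ^ k
      = ((n : ℂ) - 1) * x ^ n - (∑ k ∈ range n, x ^ k) + 1 := by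
  induction n with
  | zero => simp
  | succ k ih =>
    rw [sum_range_succ, sum_range_succ, mul_add, ih]
    push_cast; ring

private lemma Lval (p : ℕ) (z : ℂ) (hz1 : z ≠ 1) (hzp : z ^ p = 1) :
    ∑ k ∈ range p, (k : ℂ) * z ^ k = p / (z - 1) := by
  have hne : z - 1 ≠ 0 := sub_ne_zero.mpr hz1
  have hg : ∑ k ∈ range p, z ^ k = 0 := by
    rw [geom_sum_eq hz1, hzp]; simp
  have h := keyL p z
  rw [hzp, hg] at h
  rw [eq_div_iff hne]
  linear_combination h

private lemma charSum (p : ℕ) (hp : 1 ≤ p) (ζ : ℂ) (hζ : IsPrimitiveRoot ζ p) (m : ℕ) :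
    ∑ j ∈ Icc 1 (p - 1), (ζ ^ m) ^ j = (if p ∣ m then (p : ℂ) else 0) - 1 := by
  have hins : range p = insert 0 (Icc 1 (p - 1)) := by
    ext x; simp [Finset.mem_range, Finset.mem_insert, Finset.mem_Icc]; omega
  have h0 : (0 : ℕ) ∉ Icc 1 (p - 1) := by simp
  have hsum : ∑ j ∈ range p, (ζ ^ m) ^ j = 1 + ∑ j ∈ Icc 1 (p - 1), (ζ ^ m) ^ j := by
    rw [hins, sum_insert h0]; simp
  have hr : ∑ j ∈ range p, (ζ ^ m) ^ j = if p ∣ m then (p : ℂ) else 0 := by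
    by_cases hd : p ∣ m
    · rw [if_pos hd, (hζ.pow_eq_one_iff_dvd m).mpr hd]; simp
    · rw [if_neg hd]
      have hz1 : ζ ^ m ≠ 1 := fun h => hd ((hζ.pow_eq_one_iff_dvd m).mp h)
      rw [geom_sum_eq hz1]
      have : (ζ ^ m) ^ p = 1 := by
        rw [← pow_mul, mul_comm, pow_mul, hζ.pow_eq_one, one_pow]
      rw [this]; simp
  rw [hr] at hsum
  linear_combination -hsum

private lemma innerK (p : ℕ) (hp : 0 < p) (l : ℕ) :
    ∑ k ∈ range p, (if p ∣ k + 2 * l then (k : ℂ) * l else 0)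
      = (((p - (2 * l) % p) % p : ℕ) : ℂ) * l := by
  haveI : NeZero p := ⟨by omega⟩
  set f : ℕ := (p - (2 * l) % p) % p with hf
  have hflt : f < p := Nat.mod_lt _ hp
  have hrle : (2 * l) % p ≤ p := le_of_lt (Nat.mod_lt _ hp)
  have hdvd : p ∣ f + 2 * l := by
    have : ((f + 2 * l : ℕ) : ZMod p) = 0 := by
      push_cast [hf, ZMod.natCast_mod, Nat.cast_sub hrle, ZMod.natCast_self]
      ring
    exact (ZMod.natCast_eq_zero_iff _ _).mp this
  have hs := Finset.sum_eq_single_of_mem (s := range p)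
      (f := fun k => if p ∣ k + 2 * l then (k : ℂ) * l else 0) f (mem_range.mpr hflt) ?_
  · rw [hs]; rw [if_pos hdvd]
  · intro k hk hne
    rw [if_neg]
    intro hd
    apply hne
    have h1 : ((k : ℕ) : ZMod p) = ((f : ℕ) : ZMod p) := by
      have hk0 : ((k + 2 * l : ℕ) : ZMod p) = 0 := (ZMod.natCast_eq_zero_iff _ _).mpr hd
      have hf0 : ((f + 2 * l : ℕ) : ZMod p) = 0 := (ZMod.natCast_eq_zero_iff _ _).mpr hdvd
      push_cast at hk0 hf0
      linear_combination hk0 - hf0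
    have := congrArg ZMod.val h1
    rwa [ZMod.val_cast_of_lt (mem_range.mp hk), ZMod.val_cast_of_lt hflt] at this

private lemma expandSum (n : ℕ) (c : ℂ) :
    ∑ l ∈ range n, (c - 2 * l) * (l : ℂ)
      = c * ((n : ℂ) * (n - 1) / 2) - 2 * ((n : ℂ) * (n - 1) * (2 * n - 1) / 6) := by
  have h : ∀ l ∈ range n, (c - 2 * (l : ℂ)) * (l : ℂ) = c * l - 2 * (l : ℂ) ^ 2 :=
    fun l _ => by ring
  rw [sum_congr rfl h, Finset.sum_sub_distrib, ← Finset.mul_sum, ← Finset.mul_sum,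
    sumId', sumSq']

private lemma Esum (p m : ℕ) (hm : p = 2 * m + 1) (hm1 : 1 ≤ m) :
    ∑ l ∈ range p, ((((p - (2 * l) % p) % p : ℕ) : ℂ) * l)
      = 5 * (p : ℂ) * ((p : ℂ) ^ 2 - 1) / 24 := by
  subst hm
  rw [range_eq_Ico, ← Finset.sum_Ico_consecutive _ (by omega : 0 ≤ m + 1)
    (by omega : m + 1 ≤ 2 * m + 1)]
  have p1 : ∀ l ∈ Ico 0 (m + 1),
      ((((2 * m + 1 - (2 * l) % (2 * m + 1)) % (2 * m + 1) : ℕ) : ℂ) * l)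
        = (((2 * m + 1 : ℕ) : ℂ) - 2 * l) * l := by
    intro l hl
    simp only [mem_Ico] at hl
    by_cases h0 : l = 0
    · subst h0; simp
    · rw [Nat.mod_eq_of_lt (by omega : 2 * l < 2 * m + 1),
        Nat.mod_eq_of_lt (by omega : 2 * m + 1 - 2 * l < 2 * m + 1),
        Nat.cast_sub (by omega : 2 * l ≤ 2 * m + 1)]
      push_cast; ring
  have p2 : ∀ l ∈ Ico (m + 1) (2 * m + 1),
      ((((2 * m + 1 - (2 * l) % (2 * m + 1)) % (2 * m + 1) : ℕ) : ℂ) * l)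
        = (2 * ((2 * m + 1 : ℕ) : ℂ) - 2 * l) * l := by
    intro l hl
    simp only [mem_Ico] at hl
    have hple : 2 * m + 1 ≤ 2 * l := by omega
    rw [Nat.mod_eq_sub_mod hple, Nat.mod_eq_of_lt (by omega : 2 * l - (2 * m + 1) < 2 * m + 1),
      Nat.mod_eq_of_lt (by omega : 2 * m + 1 - (2 * l - (2 * m + 1)) < 2 * m + 1),
      Nat.cast_sub (by omega : 2 * l - (2 * m + 1) ≤ 2 * m + 1), Nat.cast_sub hple]
    push_cast; ring
  rw [sum_congr rfl p1, sum_congr rfl p2, ← range_eq_Ico,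
    Finset.sum_Ico_eq_sub _ (by omega : m + 1 ≤ 2 * m + 1),
    expandSum, expandSum, expandSum]
  push_cast
  ring

/-- For an odd prime `p` and a primitive `p`-th root of unity `ζ ∈ ℂ`,
`∑_{j=1}^{p-1} 1/((1-ζ^j)(1-ζ^{2j})) = (p-1)(11-p)/24`. -/
theorem sum_inv_one_sub_zeta_mul_one_sub_zeta_two (p : ℕ) (hp : p.Prime) (hodd : Odd p)
    (ζ : ℂ) (hζ : IsPrimitiveRoot ζ p) :
    ∑ j ∈ Finset.Icc 1 (p - 1), 1 / ((1 - ζ ^ j) * (1 - ζ ^ (2 * j))) =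
      ((p : ℂ) - 1) * (11 - (p : ℂ)) / 24 := by
  obtain ⟨m, hm⟩ := hodd
  have hp1 := hp.one_lt
  have hm1 : 1 ≤ m := by omega
  have hpos : 0 < p := by omega
  have hq : (p : ℂ) ≠ 0 := Nat.cast_ne_zero.mpr (by omega)
  have hzp : ζ ^ p = 1 := hζ.pow_eq_one
  have hdvd_iff : ∀ n, ζ ^ n = 1 ↔ p ∣ n := fun n => hζ.pow_eq_one_iff_dvd n
  have step1 : ∀ j ∈ Finset.Icc 1 (p - 1),
      1 / ((1 - ζ ^ j) * (1 - ζ ^ (2 * j)))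
        = (∑ k ∈ range p, (k : ℂ) * (ζ ^ j) ^ k)
            * (∑ l ∈ range p, (l : ℂ) * (ζ ^ (2 * j)) ^ l) / (p : ℂ) ^ 2 := by
    intro j hj
    simp only [mem_Icc] at hj
    have hnd1 : ¬ p ∣ j := by
      intro h; have := Nat.le_of_dvd (by omega) h; omega
    have hnd2 : ¬ p ∣ 2 * j := by
      intro h
      rcases (Nat.Prime.dvd_mul hp).mp h with h2 | h2
      · have := Nat.le_of_dvd (by norm_num) h2; omega
      · exact hnd1 h2
    have hz1 : ζ ^ j ≠ 1 := fun h => hnd1 ((hdvd_iff j).mp h)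
    have hz2 : ζ ^ (2 * j) ≠ 1 := fun h => hnd2 ((hdvd_iff _).mp h)
    have hp1' : (ζ ^ j) ^ p = 1 := by rw [← pow_mul, mul_comm, pow_mul, hzp, one_pow]
    have hp2' : (ζ ^ (2 * j)) ^ p = 1 := by rw [← pow_mul, mul_comm, pow_mul, hzp, one_pow]
    rw [Lval p _ hz1 hp1', Lval p _ hz2 hp2']
    have d1 : (1 : ℂ) - ζ ^ j ≠ 0 := sub_ne_zero.mpr (Ne.symm hz1)
    have d2 : (1 : ℂ) - ζ ^ (2 * j) ≠ 0 := sub_ne_zero.mpr (Ne.symm hz2)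
    have d1' : ζ ^ j - 1 ≠ 0 := sub_ne_zero.mpr hz1
    have d2' : ζ ^ (2 * j) - 1 ≠ 0 := sub_ne_zero.mpr hz2
    field_simp
    ring
  rw [Finset.sum_congr rfl step1]
  have step2 : ∀ j ∈ Finset.Icc 1 (p - 1),
      (∑ k ∈ range p, (k : ℂ) * (ζ ^ j) ^ k)
          * (∑ l ∈ range p, (l : ℂ) * (ζ ^ (2 * j)) ^ l) / (p : ℂ) ^ 2
        = (∑ k ∈ range p, ∑ l ∈ range p, (k : ℂ) * l * (ζ ^ (k + 2 * l)) ^ j)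
            / (p : ℂ) ^ 2 := by
    intro j _
    rw [Finset.sum_mul_sum]
    congr 1
    refine sum_congr rfl fun k _ => sum_congr rfl fun l _ => ?_
    have hpow : (ζ ^ j) ^ k * (ζ ^ (2 * j)) ^ l = (ζ ^ (k + 2 * l)) ^ j := by
      rw [← pow_mul, ← pow_mul, ← pow_add, ← pow_mul]
      congr 1; ring
    calc (k : ℂ) * (ζ ^ j) ^ k * ((l : ℂ) * (ζ ^ (2 * j)) ^ l)
        = (k : ℂ) * l * ((ζ ^ j) ^ k * (ζ ^ (2 * j)) ^ l) := by ring
      _ = (k : ℂ) * l * (ζ ^ (k + 2 * l)) ^ j := by rw [hpow]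
  rw [Finset.sum_congr rfl step2, ← Finset.sum_div, Finset.sum_comm]
  have step3 : ∀ k ∈ range p,
      ∑ j ∈ Finset.Icc 1 (p - 1), ∑ l ∈ range p, (k : ℂ) * l * (ζ ^ (k + 2 * l)) ^ j
        = ∑ l ∈ range p,
            ((p : ℂ) * (if p ∣ k + 2 * l then (k : ℂ) * l else 0) - (k : ℂ) * l) := by
    intro k _
    rw [Finset.sum_comm]
    refine sum_congr rfl fun l _ => ?_
    rw [← Finset.mul_sum, charSum p (by omega) ζ hζ (k + 2 * l)]
    by_cases h : p ∣ k + 2 * l <;> simp [h] <;> ring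
  rw [Finset.sum_congr rfl step3]
  simp only [Finset.sum_sub_distrib, ← Finset.mul_sum]
  have hE : ∑ k ∈ range p, ∑ l ∈ range p, (if p ∣ k + 2 * l then (k : ℂ) * l else 0)
      = 5 * (p : ℂ) * ((p : ℂ) ^ 2 - 1) / 24 := by
    rw [Finset.sum_comm]
    have : ∀ l ∈ range p,
        ∑ k ∈ range p, (if p ∣ k + 2 * l then (k : ℂ) * l else 0)
          = (((p - (2 * l) % p) % p : ℕ) : ℂ) * l := fun l _ => innerK p hpos l
    rw [Finset.sum_congr rfl this, Esum p m hm hm1]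
  rw [hE, ← Finset.sum_mul, sumId']
  field_simp
  ring
end

section
/- Let p be an odd prime and let ζ ∈ ℂ be a primitive p-th root of unity. Then ∑_{j=1}^{p-1} 1/((1-ζ^j)(1-ζ^{-j})) = (p²-1)/12. (Equivalently, the holomorphic Lefschetz coefficient a_{p-1} = (1/(p-1))·∑_{j=1}^{p-1} 1/((1-ζ^j)(1-ζ^{(p-1)j})) equals (p+1)/12.) -/
lemma aux_geom (p : ℕ) (w : ℂ) (hw : w ^ p = 1) (hw1 : w ≠ 1) :
    ∑ k ∈ Finset.range p, w ^ k = 0 := by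
  rw [geom_sum_eq hw1, hw, sub_self, zero_div]

lemma aux_tele (p : ℕ) (w : ℂ) (hw : w ^ p = 1) (hw1 : w ≠ 1) :
    (1 - w) * ∑ k ∈ Finset.range p, (k : ℂ) * w ^ k = -p := by
  have tele := Finset.sum_range_sub' (fun k => (k : ℂ) * w ^ k) p
  have geo := aux_geom p w hw hw1
  calc (1 - w) * ∑ k ∈ Finset.range p, (k : ℂ) * w ^ k
      = ∑ k ∈ Finset.range p,
        (((k : ℂ) * w ^ k - ((k + 1 : ℕ) : ℂ) * w ^ (k + 1)) + w * w ^ k) := by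
        rw [Finset.mul_sum]
        refine Finset.sum_congr rfl fun k _ => ?_
        push_cast; ring
    _ = ((0 : ℕ) : ℂ) * w ^ 0 - (p : ℂ) * w ^ p + w * ∑ k ∈ Finset.range p, w ^ k := by
        rw [Finset.sum_add_distrib, tele, ← Finset.mul_sum]
    _ = -p := by rw [geo, hw]; push_cast; ring

lemma aux_inv (p : ℕ) (hp : 0 < p) (w : ℂ) (hw : w ^ p = 1) (hw1 : w ≠ 1) :
    1 / (1 - w) = -(∑ k ∈ Finset.range p, (k : ℂ) * w ^ k) / p := by
  have hne : (1 : ℂ) - w ≠ 0 := sub_ne_zero.mpr (Ne.symm hw1)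
  have hpne : (p : ℂ) ≠ 0 := Nat.cast_ne_zero.mpr hp.ne'
  have h1 := aux_tele p w hw hw1
  rw [div_eq_div_iff hne hpne]
  linear_combination h1

lemma aux_sum_id (n : ℕ) : ∑ k ∈ Finset.range n, (k : ℂ) = n * (n - 1) / 2 := by
  induction n with
  | zero => simp
  | succ n ih => rw [Finset.sum_range_succ, ih]; push_cast; ring

lemma aux_sum_sq (n : ℕ) : ∑ k ∈ Finset.range n, (k : ℂ) * k = n * (n - 1) * (2 * n - 1) / 6 := by
  induction n with
  | zero => simp
  | succ n ih => rw [Finset.sum_range_succ, ih]; push_cast; ring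

/-- For an odd prime `p` and a primitive `p`-th root of unity `ζ ∈ ℂ`,
`∑_{j=1}^{p-1} 1/((1-ζ^j)(1-ζ^{-j})) = (p²-1)/12`. -/
theorem sum_inv_one_sub_zeta_mul_one_sub_zeta_inv (p : ℕ) (hp : p.Prime) (hodd : Odd p)
    (ζ : ℂ) (hζ : IsPrimitiveRoot ζ p) :
    ∑ j ∈ Finset.Icc 1 (p - 1), 1 / ((1 - ζ ^ j) * (1 - (ζ ^ j)⁻¹)) =
      ((p : ℂ) ^ 2 - 1) / 12 := by
  have hppos : 0 < p := hp.pos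
  have hpne : (p : ℂ) ≠ 0 := Nat.cast_ne_zero.mpr hppos.ne'
  have hζp : ζ ^ p = 1 := hζ.pow_eq_one
  -- the double-sum function
  set g : ℕ → ℂ := fun j =>
    (∑ k ∈ Finset.range p, (k : ℂ) * (ζ ^ j) ^ k) *
    (∑ l ∈ Finset.range p, (l : ℂ) * ((ζ ^ j)⁻¹) ^ l) with hg
  -- each term equals g j / p^2
  have hterm : ∀ j ∈ Finset.Icc 1 (p - 1),
      1 / ((1 - ζ ^ j) * (1 - (ζ ^ j)⁻¹)) = g j / (p : ℂ) ^ 2 := by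
    intro j hj
    rw [Finset.mem_Icc] at hj
    have hjlt : j < p := lt_of_le_of_lt hj.2 (Nat.sub_lt hppos one_pos)
    have hw1 : ζ ^ j ≠ 1 := hζ.pow_ne_one_of_pos_of_lt (by omega) hjlt
    have hpowp : ∀ m : ℕ, (ζ ^ m) ^ p = 1 := fun m => by
      rw [← pow_mul, mul_comm, pow_mul, hζp, one_pow]
    have hwp : (ζ ^ j) ^ p = 1 := hpowp j
    have hwinv1 : (ζ ^ j)⁻¹ ≠ 1 := by
      intro h; apply hw1
      rw [← inv_inv (ζ ^ j), h, inv_one]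
    have hwinvp : ((ζ ^ j)⁻¹) ^ p = 1 := by rw [inv_pow, hwp, inv_one]
    rw [one_div, mul_inv, ← one_div, ← one_div,
      aux_inv p hppos _ hwp hw1, aux_inv p hppos _ hwinvp hwinv1]
    simp only [hg]
    rw [div_mul_div_comm, neg_mul_neg, sq]
  rw [Finset.sum_congr rfl hterm, ← Finset.sum_div]
  -- extend to range p
  have hins : Finset.range p = insert 0 (Finset.Icc 1 (p - 1)) := by
    ext x
    simp only [Finset.mem_range, Finset.mem_insert, Finset.mem_Icc]
    omega
  have h0 : g 0 = ((p : ℂ) * (p - 1) / 2) ^ 2 := by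
    simp only [hg, pow_zero, inv_one, one_pow, mul_one, aux_sum_id]
    ring
  have hsum : ∑ j ∈ Finset.range p, g j = (p : ℂ) * ((p : ℂ) * (p - 1) * (2 * p - 1) / 6) := by
    have hswap : ∀ j, g j = ∑ k ∈ Finset.range p, ∑ l ∈ Finset.range p,
        ((k : ℂ) * l) * ((ζ ^ k * (ζ ^ l)⁻¹) ^ j) := by
      intro j
      simp only [hg]
      rw [Finset.sum_mul_sum]
      refine Finset.sum_congr rfl fun k _ => Finset.sum_congr rfl fun l _ => ?_
      simp only [mul_pow, inv_pow, ← pow_mul, mul_comm j k, mul_comm j l]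
      ring
    simp only [hswap]
    rw [Finset.sum_comm]
    have hinner : ∀ k ∈ Finset.range p, (∑ j ∈ Finset.range p, ∑ l ∈ Finset.range p,
        ((k : ℂ) * l) * ((ζ ^ k * (ζ ^ l)⁻¹) ^ j)) = (p : ℂ) * ((k : ℂ) * k) := by
      intro k hk
      rw [Finset.mem_range] at hk
      rw [Finset.sum_comm]
      have horth : ∀ l ∈ Finset.range p,
          (∑ j ∈ Finset.range p, ((k : ℂ) * l) * ((ζ ^ k * (ζ ^ l)⁻¹) ^ j)) =
          if l = k then (p : ℂ) * ((k : ℂ) * k) else 0 := by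
        intro l hl
        rw [Finset.mem_range] at hl
        rw [← Finset.mul_sum]
        have hζ0 : ζ ≠ 0 := hζ.ne_zero hppos.ne'
        have hpowp : ∀ m : ℕ, (ζ ^ m) ^ p = 1 := fun m => by
          rw [← pow_mul, mul_comm, pow_mul, hζp, one_pow]
        by_cases h : l = k
        · subst h
          rw [if_pos rfl, mul_inv_cancel₀ (pow_ne_zero l hζ0)]
          simp only [one_pow, Finset.sum_const, Finset.card_range, nsmul_eq_mul]
          ring
        · have hu : ζ ^ k * (ζ ^ l)⁻¹ ≠ 1 := by
            intro habs
            apply h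
            have habs' : ζ ^ k / ζ ^ l = 1 := by rw [div_eq_mul_inv]; exact habs
            have : ζ ^ k = ζ ^ l := by
              rw [div_eq_one_iff_eq (pow_ne_zero l hζ0)] at habs'
              exact habs'
            exact (hζ.pow_inj hl hk this.symm)
          have hup : (ζ ^ k * (ζ ^ l)⁻¹) ^ p = 1 := by
            rw [mul_pow, hpowp k, inv_pow, hpowp l, inv_one, one_mul]
          rw [aux_geom p _ hup hu, mul_zero, if_neg h]
      rw [Finset.sum_congr rfl horth, Finset.sum_ite_eq' (Finset.range p) k
        (fun _ => (p : ℂ) * ((k : ℂ) * k)), if_pos (Finset.mem_range.mpr hk)]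
    rw [Finset.sum_congr rfl hinner, ← Finset.mul_sum, aux_sum_sq]
  rw [hins, Finset.sum_insert (by simp)] at hsum
  have : ∑ j ∈ Finset.Icc 1 (p - 1), g j =
      (p : ℂ) * ((p : ℂ) * (p - 1) * (2 * p - 1) / 6) - ((p : ℂ) * (p - 1) / 2) ^ 2 := by
    rw [h0] at hsum
    linear_combination hsum
  rw [this]
  field_simp
  ring
end

section
/- Let ζ ∈ ℂ be a primitive 7th root of unity and set x = (1 + ζ + ζ⁴)³ / ζ⁵ ∈ ℂ. Then the subfield of ℂ generated over ℚ by x equals the subfield of ℂ generated over ℚ by ζ + ζ⁻¹, i.e., ℚ(x) = ℚ(ζ + ζ⁻¹) as intermediate fields of ℂ/ℚ. In particular x is not a rational number. -/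
open Polynomial in
lemma cubic_no_rat_root (r : ℚ) : r ^ 3 + r ^ 2 - 2 * r - 1 ≠ 0 := by
  intro h
  set p : ℤ[X] := X ^ 3 + X ^ 2 - 2 * X - 1 with hp
  have hmonic : p.Monic := by rw [hp]; monicity!
  have hroot : aeval r p = 0 := by
    simp only [hp, map_add, map_sub, map_pow, map_mul, map_ofNat, map_one, aeval_X]
    linear_combination h
  obtain ⟨n, hn, hdvd⟩ := exists_integer_of_is_root_of_monic hmonic hroot
  have hc0 : p.coeff 0 = -1 := by simp [hp, coeff_one]
  rw [hc0] at hdvd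
  have hu : IsUnit n := isUnit_of_dvd_one ((dvd_neg).mp hdvd)
  have hr : r = (n : ℚ) := by simpa using hn
  rcases Int.isUnit_iff.mp hu with h1 | h1 <;> rw [hr, h1] at h <;> norm_num at h

/-- For a primitive 7th root of unity `ζ ∈ ℂ` and `x = (1 + ζ + ζ⁴)³ / ζ⁵`,
the subfield `ℚ(x)` of `ℂ` equals `ℚ(ζ + ζ⁻¹)`; in particular `x` is not rational. -/
theorem adjoin_trace_cubed_div_det_eq_adjoin_zeta_add_inv
    (ζ : ℂ) (hζ : IsPrimitiveRoot ζ 7) (x : ℂ)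
    (hx : x = (1 + ζ + ζ ^ 4) ^ 3 / ζ ^ 5) :
    IntermediateField.adjoin ℚ ({x} : Set ℂ) =
        IntermediateField.adjoin ℚ ({ζ + ζ⁻¹} : Set ℂ) ∧
      ∀ q : ℚ, (q : ℂ) ≠ x := by
  have hζ0 : ζ ≠ 0 := hζ.ne_zero (by norm_num)
  have h7 : ζ ^ 7 = 1 := hζ.pow_eq_one
  have hs : 1 + ζ + ζ ^ 2 + ζ ^ 3 + ζ ^ 4 + ζ ^ 5 + ζ ^ 6 = 0 := by
    have := hζ.geom_sum_eq_zero (by norm_num)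
    simp [Finset.sum_range_succ] at this
    linear_combination this
  have hinv : ζ⁻¹ = ζ ^ 6 := inv_eq_of_mul_eq_one_right (by linear_combination h7)
  have hx' : x = (1 + ζ + ζ ^ 4) ^ 3 * ζ ^ 2 := by
    rw [hx]
    field_simp
    linear_combination (-(1 + ζ + ζ ^ 4) ^ 3) * h7
  -- identity A : x is a polynomial in c = ζ + ζ⁻¹
  have hA : x = 11 - 3 * (ζ + ζ⁻¹) - 5 * (ζ + ζ⁻¹) ^ 2 := by
    rw [hinv, hx']
    linear_combination ((-11) + 14 * ζ + 3 * ζ^2 + (-3) * ζ^3 + (-2) * ζ^5 + 5 * ζ^6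
      + (-1) * ζ^7 + ζ^8) * hs
  -- identity B : c is a polynomial in x
  have hB : ζ + ζ⁻¹ = (5 * x ^ 2 - 56 * x - 14) / 13 := by
    rw [hinv, hx']
    rw [eq_div_iff (by norm_num : (13:ℂ) ≠ 0)]
    linear_combination (14 + (-1) * ζ + 43 * ζ^2 + 112 * ζ^3 + (-5) * ζ^4 + (-137) * ζ^5
      + 80 * ζ^6 + 144 * ζ^7 + (-174) * ζ^8 + (-200) * ζ^9 + 155 * ζ^10 + (-230) * ζ^12
      + (-25) * ζ^13 + 80 * ζ^14 + (-80) * ζ^15 + (-75) * ζ^16 + 30 * ζ^17 + (-30) * ζ^19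
      + 5 * ζ^21 + (-5) * ζ^22) * hs
  have hmemx : x ∈ IntermediateField.adjoin ℚ ({x} : Set ℂ) :=
    IntermediateField.mem_adjoin_simple_self ℚ x
  have hmemc : ζ + ζ⁻¹ ∈ IntermediateField.adjoin ℚ ({ζ + ζ⁻¹} : Set ℂ) :=
    IntermediateField.mem_adjoin_simple_self ℚ (ζ + ζ⁻¹)
  have heq : IntermediateField.adjoin ℚ ({x} : Set ℂ) =
      IntermediateField.adjoin ℚ ({ζ + ζ⁻¹} : Set ℂ) := by
    apply le_antisymm
    · rw [IntermediateField.adjoin_le_iff]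
      intro y hy
      rw [Set.mem_singleton_iff] at hy
      subst hy
      rw [hA]
      set K := IntermediateField.adjoin ℚ ({ζ + ζ⁻¹} : Set ℂ)
      have h11 : (11 : ℂ) ∈ K := by
        simpa using K.algebraMap_mem (11 : ℚ)
      have h3 : (3 : ℂ) ∈ K := by simpa using K.algebraMap_mem (3 : ℚ)
      have h5 : (5 : ℂ) ∈ K := by simpa using K.algebraMap_mem (5 : ℚ)
      exact K.sub_mem (K.sub_mem h11 (K.mul_mem h3 hmemc))
        (K.mul_mem h5 (K.pow_mem hmemc 2))
    · rw [IntermediateField.adjoin_le_iff]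
      intro y hy
      rw [Set.mem_singleton_iff] at hy
      subst hy
      rw [hB]
      set K := IntermediateField.adjoin ℚ ({x} : Set ℂ)
      have h56 : (56 : ℂ) ∈ K := by simpa using K.algebraMap_mem (56 : ℚ)
      have h14 : (14 : ℂ) ∈ K := by simpa using K.algebraMap_mem (14 : ℚ)
      have h5 : (5 : ℂ) ∈ K := by simpa using K.algebraMap_mem (5 : ℚ)
      have h13 : (13 : ℂ) ∈ K := by simpa using K.algebraMap_mem (13 : ℚ)
      exact K.div_mem (K.sub_mem (K.sub_mem (K.mul_mem h5 (K.pow_mem hmemx 2))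
        (K.mul_mem h56 hmemx)) h14) h13
  refine ⟨heq, ?_⟩
  intro q hq
  -- c satisfies the cubic t^3 + t^2 - 2t - 1 = 0
  have hc3 : (ζ + ζ⁻¹) ^ 3 + (ζ + ζ⁻¹) ^ 2 - 2 * (ζ + ζ⁻¹) - 1 = 0 := by
    rw [hinv]
    linear_combination ((-1) + (-1) * ζ + 3 * ζ^2 + (-1) * ζ^4 + (-2) * ζ^6 + 3 * ζ^7
      + (-1) * ζ^11 + ζ^12) * hs
  -- if x were rational, c would be rational
  have hcq : ∃ r : ℚ, (r : ℂ) = ζ + ζ⁻¹ := by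
    have : ζ + ζ⁻¹ ∈ IntermediateField.adjoin ℚ ({x} : Set ℂ) := heq ▸ hmemc
    rw [← hq] at this
    have hbot : (q : ℂ) ∈ (⊥ : IntermediateField ℚ ℂ) := by
      rw [IntermediateField.mem_bot]
      exact ⟨q, by simp⟩
    have hle : IntermediateField.adjoin ℚ ({(q : ℂ)} : Set ℂ) ≤ ⊥ := by
      rw [IntermediateField.adjoin_le_iff]
      intro y hy
      rw [Set.mem_singleton_iff] at hy
      subst hy
      exact hbot
    have := hle this
    rw [IntermediateField.mem_bot] at this
    obtain ⟨r, hr⟩ := this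
    exact ⟨r, by simpa using hr⟩
  obtain ⟨r, hr⟩ := hcq
  rw [← hr] at hc3
  have : r ^ 3 + r ^ 2 - 2 * r - 1 = 0 := by exact_mod_cast hc3
  exact cubic_no_rat_root r this
end

section
/- There are no integers d, a₂, a₃, b₁, b₂, b₃, c₁, c₂, c₃ satisfying all of the following: 0 ≤ a₂, 0 ≤ -2a₂ + a₃, 0 ≤ d + a₂ - 3a₃, 0 ≤ -2b₁ + b₂, 0 ≤ b₁ - 2b₂ + b₃, 0 ≤ 2 + 2d + b₂ - 3b₃, 0 ≤ -2c₁ + c₂, 0 ≤ c₁ - 2c₂ + c₃, 0 ≤ -1 + 4d + c₂ - 3c₃, -3d + a₃ + b₃ + c₃ = -1, and -2 - 9d² - 2a₂² + 2a₂a₃ - 3a₃² - 2b₁² + 2b₁b₂ - 2b₂² + 2b₂b₃ - 3b₃² - 2c₁² + 2c₁c₂ - 2c₂² + 2c₂c₃ - 3c₃² + 4b₃ - 2c₃ + 2d·a₃ + 4d·b₃ + 8d·c₃ = -1. -/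
/-- The full integer system (case `m = 1`) in the proof that the minimal resolution of the
order-7 quotient of a fake projective plane contains no `(-1)`-curve has no solution. -/
theorem no_solution_full_system_m_one :
    ¬ ∃ d a₂ a₃ b₁ b₂ b₃ c₁ c₂ c₃ : ℤ,
        0 ≤ a₂ ∧ 0 ≤ (-2) * a₂ + a₃ ∧ 0 ≤ d + a₂ - 3 * a₃ ∧
        0 ≤ (-2) * b₁ + b₂ ∧ 0 ≤ b₁ - 2 * b₂ + b₃ ∧ 0 ≤ 2 + 2 * d + b₂ - 3 * b₃ ∧
        0 ≤ (-2) * c₁ + c₂ ∧ 0 ≤ c₁ - 2 * c₂ + c₃ ∧ 0 ≤ -1 + 4 * d + c₂ - 3 * c₃ ∧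
        (-3) * d + a₃ + b₃ + c₃ = -1 ∧
        -2 - 9 * d ^ 2 - 2 * a₂ ^ 2 + 2 * a₂ * a₃ - 3 * a₃ ^ 2
          - 2 * b₁ ^ 2 + 2 * b₁ * b₂ - 2 * b₂ ^ 2 + 2 * b₂ * b₃ - 3 * b₃ ^ 2
          - 2 * c₁ ^ 2 + 2 * c₁ * c₂ - 2 * c₂ ^ 2 + 2 * c₂ * c₃ - 3 * c₃ ^ 2
          + 4 * b₃ - 2 * c₃ + 2 * d * a₃ + 4 * d * b₃ + 8 * d * c₃ = -1 := by
  rintro ⟨d, a₂, a₃, b₁, b₂, b₃, c₁, c₂, c₃, -, -, -, -, -, -, -, -, -, hlin, hq⟩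
  nlinarith [sq_nonneg (27 * d - 3 * a₃ - 6 * b₃ - 12 * c₃ - 10),
    sq_nonneg (2 * a₂ - a₃), sq_nonneg (129 * a₃ - 12 * b₃ - 24 * c₃ + 40),
    sq_nonneg (2 * b₁ - b₂), sq_nonneg (3 * b₂ - 2 * b₃),
    sq_nonneg (723 * b₃ - 360 * c₃ - 604), sq_nonneg (2 * c₁ - c₂),
    sq_nonneg (3 * c₂ - 2 * c₃), sq_nonneg (c₃ - 1), hlin, hq]
end

section
/- The 10×10 integer matrix with rows (-2, 0, 0, 0, 0, 0, 2, 0, 0, -1), (0, -9, 0, -1, 0, 0, -2, 0, 0, -4), (0, 0, -2, 1, 0, 0, 0, 0, 0, 0), (0, -1, 1, -3, 0, 0, 0, 0, 0, 0), (0, 0, 0, 0, -2, 1, 0, 0, 0, 0), (0, 0, 0, 0, 1, -2, 1, 0, 0, 0), (2, -2, 0, 0, 0, 1, -3, 0, 0, 0), (0, 0, 0, 0, 0, 0, 0, -2, 1, 0), (0, 0, 0, 0, 0, 0, 0, 1, -2, 1), (-1, -4, 0, 0, 0, 0, 0, 0, 1, -3) has determinant -1. -/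
set_option maxHeartbeats 1000000
set_option maxRecDepth 8000

private def Lmat : Matrix (Fin 10) (Fin 10) ℤ :=
  !![1, 0, 0, 0, 0, 0, 0, 0, 0, 0;
     0, 1, 0, 0, 0, 0, 0, 0, 0, 0;
     0, 0, 1, 0, 0, 0, 0, 0, 0, 0;
     0, -2, 9, 18, 0, 0, 0, 0, 0, 0;
     0, 0, 0, 0, 1, 0, 0, 0, 0, 0;
     0, 0, 0, 0, 1, 2, 0, 0, 0, 0;
     129, -30, 6, 12, 43, 86, 129, 0, 0, 0;
     0, 0, 0, 0, 0, 0, 0, 1, 0, 0;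
     0, 0, 0, 0, 0, 0, 0, 1, 2, 0;
     3, -60, 12, 24, 18, 36, 54, 34, 68, 102]

private def Mmat : Matrix (Fin 10) (Fin 10) ℤ :=
  !![(-2 : ℤ), 0, 0, 0, 0, 0, 2, 0, 0, -1;
     0, -9, 0, -1, 0, 0, -2, 0, 0, -4;
     0, 0, -2, 1, 0, 0, 0, 0, 0, 0;
     0, -1, 1, -3, 0, 0, 0, 0, 0, 0;
     0, 0, 0, 0, -2, 1, 0, 0, 0, 0;
     0, 0, 0, 0, 1, -2, 1, 0, 0, 0;
     2, -2, 0, 0, 0, 1, -3, 0, 0, 0;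
     0, 0, 0, 0, 0, 0, 0, -2, 1, 0;
     0, 0, 0, 0, 0, 0, 0, 1, -2, 1;
     -1, -4, 0, 0, 0, 0, 0, 0, 1, -3]

private def Umat : Matrix (Fin 10) (Fin 10) ℤ :=
  !![-2, 0, 0, 0, 0, 0, 2, 0, 0, -1;
     0, -9, 0, -1, 0, 0, -2, 0, 0, -4;
     0, 0, -2, 1, 0, 0, 0, 0, 0, 0;
     0, 0, 0, -43, 0, 0, 4, 0, 0, 8;
     0, 0, 0, 0, -2, 1, 0, 0, 0, 0;
     0, 0, 0, 0, 0, -3, 2, 0, 0, 0;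
     0, 0, 0, 0, 0, 0, 17, 0, 0, -9;
     0, 0, 0, 0, 0, 0, 0, -2, 1, 0;
     0, 0, 0, 0, 0, 0, 0, 0, -3, 2;
     0, 0, 0, 0, 0, 0, 0, 0, 0, -1]

private lemma LM_eq_U : Lmat * Mmat = Umat := by decide

private lemma detL : Lmat.det = 947376 := by
  rw [Matrix.det_of_lowerTriangular Lmat (by show ∀ i j : Fin 10, i < j → Lmat i j = 0; exact @of_decide_eq_true _ (@Fintype.decidableForallFintype _ _ (fun i => @Fintype.decidableForallFintype _ _ (fun j => instDecidableForall) _) _) rfl)]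
  decide

private lemma detU : Umat.det = -947376 := by
  rw [Matrix.det_of_upperTriangular (show Umat.BlockTriangular id from by show ∀ i j : Fin 10, j < i → Umat i j = 0; exact @of_decide_eq_true _ (@Fintype.decidableForallFintype _ _ (fun i => @Fintype.decidableForallFintype _ _ (fun j => instDecidableForall) _) _) rfl)]
  decide

private lemma detM : Mmat.det = -1 := by
  have h := Matrix.det_mul Lmat Mmat
  simp only [LM_eq_U, detL, detU] at h
  exact mul_left_cancel₀ (by norm_num : (947376:ℤ) ≠ 0)
    (h.symm.trans (by norm_num : (-947376 : ℤ) = 947376 * (-1)))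

/-- The intersection matrix of the ten divisor classes `M, L, A₂, A₃, B₁, B₂, B₃, C₁, C₂, C₃`
has determinant `-1`. -/
theorem intersection_matrix_det :
    Matrix.det
      !![(-2 : ℤ), 0, 0, 0, 0, 0, 2, 0, 0, -1;
         0, -9, 0, -1, 0, 0, -2, 0, 0, -4;
         0, 0, -2, 1, 0, 0, 0, 0, 0, 0;
         0, -1, 1, -3, 0, 0, 0, 0, 0, 0;
         0, 0, 0, 0, -2, 1, 0, 0, 0, 0;
         0, 0, 0, 0, 1, -2, 1, 0, 0, 0;
         2, -2, 0, 0, 0, 1, -3, 0, 0, 0;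
         0, 0, 0, 0, 0, 0, 0, -2, 1, 0;
         0, 0, 0, 0, 0, 0, 0, 1, -2, 1;
         -1, -4, 0, 0, 0, 0, 0, 0, 1, -3] = -1 := by
  have e : !![(-2 : ℤ), 0, 0, 0, 0, 0, 2, 0, 0, -1;
         0, -9, 0, -1, 0, 0, -2, 0, 0, -4;
         0, 0, -2, 1, 0, 0, 0, 0, 0, 0;
         0, -1, 1, -3, 0, 0, 0, 0, 0, 0;
         0, 0, 0, 0, -2, 1, 0, 0, 0, 0;
         0, 0, 0, 0, 1, -2, 1, 0, 0, 0;
         2, -2, 0, 0, 0, 1, -3, 0, 0, 0;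
         0, 0, 0, 0, 0, 0, 0, -2, 1, 0;
         0, 0, 0, 0, 0, 0, 0, 1, -2, 1;
         -1, -4, 0, 0, 0, 0, 0, 0, 1, -3] = Mmat := rfl
  rw [e]
  exact detM
end

section
/- Let n be a positive integer, let r ≥ 2 be an integer, and let m₁ ≤ m₂ ≤ ... ≤ m_r be integers with each m_i ≥ 2 and each m_i dividing n, such that 1/n = (r - 1) - ∑_{i=1}^{r} 1/m_i (as rational numbers). Then exactly one of the following holds: n = 2, r = 3 and (m₁, m₂, m₃) = (2, 2, 2); n = 3, r = 2 and (m₁, m₂) = (3, 3); n = 4, r = 2 and (m₁, m₂) = (2, 4); n = 6, r = 2 and (m₁, m₂) = (2, 3). In particular there is no solution with n = 5 or n ≥ 7. -/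
/-- Canonical bundle formula analysis: if `n ≥ 1`, `r ≥ 2`, `m 0 ≤ m 1 ≤ … ≤ m (r-1)` are
multiplicities `≥ 2` each dividing `n`, and `1/n = (r-1) - ∑ 1/mᵢ`, then the solution is
one of `(n, (mᵢ)) = (2,(2,2,2)), (3,(3,3)), (4,(2,4)), (6,(2,3))`; in particular
`n ≠ 5` and `n < 7`. -/
theorem multiple_fibre_multiplicities (n r : ℕ) (m : ℕ → ℕ)
    (hn : 0 < n) (hr : 2 ≤ r)
    (hmono : ∀ i j, i ≤ j → j < r → m i ≤ m j)
    (hm2 : ∀ i < r, 2 ≤ m i)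
    (hdvd : ∀ i < r, m i ∣ n)
    (heq : (1 : ℚ) / n = (r - 1 : ℚ) - ∑ i ∈ Finset.range r, 1 / (m i : ℚ)) :
    ((n = 2 ∧ r = 3 ∧ m 0 = 2 ∧ m 1 = 2 ∧ m 2 = 2) ∨
      (n = 3 ∧ r = 2 ∧ m 0 = 3 ∧ m 1 = 3) ∨
      (n = 4 ∧ r = 2 ∧ m 0 = 2 ∧ m 1 = 4) ∨
      (n = 6 ∧ r = 2 ∧ m 0 = 2 ∧ m 1 = 3)) ∧
      n ≠ 5 ∧ n < 7 := by
  have hn2 : 2 ≤ n := le_trans (hm2 0 (by omega)) (Nat.le_of_dvd hn (hdvd 0 (by omega)))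
  have hnQ : (2:ℚ) ≤ (n:ℚ) := by exact_mod_cast hn2
  have hnpos : (0:ℚ) < (n:ℚ) := by positivity
  have hninv : (1:ℚ)/n ≤ 1/2 := by
    rw [div_le_div_iff₀ hnpos (by norm_num)]; linarith
  have hninvpos : (0:ℚ) < 1/n := by positivity
  have hle : ∀ i < r, (1:ℚ)/(m i) ≤ 1/2 := by
    intro i hi
    have h2 : (2:ℚ) ≤ (m i : ℚ) := by exact_mod_cast hm2 i hi
    rw [div_le_div_iff₀ (by linarith) (by norm_num)]; linarith
  have hsum : ∑ i ∈ Finset.range r, (1:ℚ)/(m i) ≤ r * (1/2) := by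
    calc ∑ i ∈ Finset.range r, (1:ℚ)/(m i)
        ≤ ∑ _i ∈ Finset.range r, (1:ℚ)/2 :=
          Finset.sum_le_sum (fun i hi => hle i (Finset.mem_range.mp hi))
      _ = r * (1/2) := by simp [Finset.sum_const, mul_comm]
  have hr3 : r ≤ 3 := by
    by_contra h
    push_neg at h
    have h4 : (4:ℚ) ≤ (r:ℚ) := by exact_mod_cast h
    linarith
  -- m i ≤ n
  have hmn : ∀ i < r, m i ≤ n := fun i hi => Nat.le_of_dvd hn (hdvd i hi)
  interval_cases r
  · -- r = 2
    have e : (1:ℚ)/n + 1/(m 0) + 1/(m 1) = 1 := by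
      rw [Finset.sum_range_succ, Finset.sum_range_one] at heq
      push_cast at heq; linarith
    have ha2 : 2 ≤ m 0 := hm2 0 (by omega)
    have hb2 : 2 ≤ m 1 := hm2 1 (by omega)
    have hab : m 0 ≤ m 1 := hmono 0 1 (by omega) (by omega)
    have hbn : m 1 ≤ n := hmn 1 (by omega)
    have haQ : (0:ℚ) < m 0 := by positivity
    have hbQ : (0:ℚ) < m 1 := by positivity
    have h1b : (1:ℚ)/n ≤ 1/(m 1) := by
      apply one_div_le_one_div_of_le hbQ; exact_mod_cast hbn
    have h1a : (1:ℚ)/(m 1) ≤ 1/(m 0) := by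
      apply one_div_le_one_div_of_le haQ; exact_mod_cast hab
    -- 1 ≤ 3/(m 0)
    have ha3 : m 0 ≤ 3 := by
      by_contra h
      push_neg at h
      have : (4:ℚ) ≤ (m 0 : ℚ) := by exact_mod_cast h
      have : (1:ℚ)/(m 0) ≤ 1/4 := by
        rw [div_le_div_iff₀ haQ (by norm_num)]; linarith
      linarith
    have hadvd := hdvd 0 (by omega)
    have hbdvd := hdvd 1 (by omega)
    interval_cases h : m 0
    · -- m 0 = 2
      have hb4 : m 1 ≤ 4 := by
        by_contra hc
        push_neg at hc
        have : (5:ℚ) ≤ (m 1 : ℚ) := by exact_mod_cast hc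
        have : (1:ℚ)/(m 1) ≤ 1/5 := by
          rw [div_le_div_iff₀ hbQ (by norm_num)]; linarith
        push_cast at e; linarith
      interval_cases h2 : m 1
      · push_cast at e; linarith
      · -- m1 = 3 : n = 6
        push_cast at e
        have : (n:ℚ) = 6 := by field_simp at e; linarith
        have hn6 : n = 6 := by exact_mod_cast this
        exact ⟨Or.inr (Or.inr (Or.inr ⟨hn6, rfl, rfl, rfl⟩)), by omega, by omega⟩
      · push_cast at e
        have : (n:ℚ) = 4 := by field_simp at e; linarith
        have hn4 : n = 4 := by exact_mod_cast this
        exact ⟨Or.inr (Or.inr (Or.inl ⟨hn4, rfl, rfl, rfl⟩)), by omega, by omega⟩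
    · -- m 0 = 3
      have hb3 : m 1 ≤ 3 := by
        by_contra hc
        push_neg at hc
        have : (4:ℚ) ≤ (m 1 : ℚ) := by exact_mod_cast hc
        have : (1:ℚ)/(m 1) ≤ 1/4 := by
          rw [div_le_div_iff₀ hbQ (by norm_num)]; linarith
        push_cast at e; linarith
      have hb3' : m 1 = 3 := by omega
      rw [hb3'] at e; push_cast at e
      have : (n:ℚ) = 3 := by field_simp at e; linarith
      have hn3 : n = 3 := by exact_mod_cast this
      exact ⟨Or.inr (Or.inl ⟨hn3, rfl, rfl, hb3'⟩), by omega, by omega⟩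
  · -- r = 3
    have e : (1:ℚ)/n + 1/(m 0) + 1/(m 1) + 1/(m 2) = 2 := by
      rw [Finset.sum_range_succ, Finset.sum_range_succ, Finset.sum_range_one] at heq
      push_cast at heq; linarith
    have h0 := hle 0 (by omega)
    have h1 := hle 1 (by omega)
    have h2 := hle 2 (by omega)
    have hninv2 : (1:ℚ)/2 ≤ 1/n := by linarith
    have hnle : (n:ℚ) ≤ 2 := by
      by_contra hc
      push_neg at hc
      have : (1:ℚ)/n < 1/2 := by
        rw [div_lt_div_iff₀ hnpos (by norm_num)]; linarith
      linarith
    have hn2' : n = 2 := by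
      have : n ≤ 2 := by exact_mod_cast hnle
      omega
    have key : ∀ i < 3, m i = 2 := by
      intro i hi
      have := hmn i hi
      have := hm2 i hi
      omega
    exact ⟨Or.inl ⟨hn2', rfl, key 0 (by omega), key 1 (by omega), key 2 (by omega)⟩,
      by omega, by omega⟩
end
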